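/- arXiv:2107.06045 — 4 statements merged into one kernel-verified Lean document; each statement's English description precedes it below -/
import Mathlib

section
/- If an LTLf formula φ is provable (⊢ φ), then φ is valid (⊨ φ), i.e., every finite nonempty trace K^n assigns truth to φ at every time step 1 ≤ i ≤ n. -/
/-- Syntax of LTLf: variables, falsum, implication, (strong) next, weak until. -/
inductive LTLf (Var : Type) : Type
  | var : Var → LTLf Var
  | bot : LTLf Var
  | imp : LTLf Var → LTLf Var → LTLf Var
  | next : LTLf Var → LTLf Var
  | wuntil : LTLf Var → LTLf Var → LTLf Var
  deriving DecidableEq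

namespace LTLf

variable {Var : Type}

/-- ¬φ := φ ⇒ ⊥ -/
def neg (φ : LTLf Var) : LTLf Var := imp φ bot
/-- ⊤ := ¬⊥ -/
def top : LTLf Var := neg bot
/-- φ ∨ ψ := ¬φ ⇒ ψ -/
def disj (φ ψ : LTLf Var) : LTLf Var := imp (neg φ) ψ
/-- φ ∧ ψ := ¬(¬φ ∨ ¬ψ) -/
def conj (φ ψ : LTLf Var) : LTLf Var := neg (disj (neg φ) (neg ψ))
/-- φ ⟺ ψ := (φ ⇒ ψ) ∧ (ψ ⇒ φ) -/
def liff (φ ψ : LTLf Var) : LTLf Var := conj (imp φ ψ) (imp ψ φ)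
/-- end := ¬X⊤ -/
def endF : LTLf Var := neg (next top)
/-- weak next: •φ := ¬X¬φ -/
def wnext (φ : LTLf Var) : LTLf Var := neg (next (neg φ))
/-- □φ := φ W ⊥ -/
def always (φ : LTLf Var) : LTLf Var := wuntil φ bot
/-- ◇φ := ¬□¬φ -/
def ev (φ : LTLf Var) : LTLf Var := neg (always (neg φ))

/-- A propositional valuation: an assignment of booleans to formulae (treating
variables, next- and weak-until-formulae as opaque atoms) that respects ⊥ and ⇒. -/
def IsPropValuation (f : LTLf Var → Bool) : Prop :=
  f bot = false ∧ ∀ φ ψ : LTLf Var, f (imp φ ψ) = (!(f φ) || f ψ)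

/-- A propositional tautology: true under every propositional valuation. -/
def Tautology (φ : LTLf Var) : Prop :=
  ∀ f : LTLf Var → Bool, IsPropValuation f → f φ = true

/-- The LTLf proof system, with hypotheses drawn from a set `F`:
`F ⊢ φ` means `⊢ φ` is derivable assuming `⊢ ψ` for each `ψ ∈ F`. -/
inductive PrvFrom : Set (LTLf Var) → LTLf Var → Prop
  /-- assumption -/
  | hyp {F φ} : φ ∈ F → PrvFrom F φ
  /-- (Taut) all propositional tautologies -/
  | taut {F φ} : Tautology φ → PrvFrom F φ
  /-- modus ponens (propositional reasoning) -/
  | mp {F φ ψ} : PrvFrom F (imp φ ψ) → PrvFrom F φ → PrvFrom F ψ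
  /-- (WkNextDistr) ⊢ •(φ⇒ψ) ⟺ (•φ ⇒ •ψ) -/
  | wkNextDistr (F) (φ ψ) :
      PrvFrom F (liff (wnext (imp φ ψ)) (imp (wnext φ) (wnext ψ)))
  /-- (EndNextContra) ⊢ end ⇒ ¬Xφ -/
  | endNextContra (F) (φ) : PrvFrom F (imp endF (neg (next φ)))
  /-- (Finite) ⊢ ◇end -/
  | fin (F) : PrvFrom F (ev endF)
  /-- (WkUntilUnroll) ⊢ φ W ψ ⟺ ψ ∨ (φ ∧ •(φ W ψ)) -/
  | wkUntilUnroll (F) (φ ψ) :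
      PrvFrom F (liff (wuntil φ ψ) (disj ψ (conj φ (wnext (wuntil φ ψ)))))
  /-- (WkNextStep) from ⊢ φ infer ⊢ •φ -/
  | wkNextStep {F φ} : PrvFrom F φ → PrvFrom F (wnext φ)
  /-- (Induction) from ⊢ φ⇒ψ and ⊢ φ⇒•φ infer ⊢ φ⇒□ψ -/
  | ind {F φ ψ} :
      PrvFrom F (imp φ ψ) → PrvFrom F (imp φ (wnext φ)) → PrvFrom F (imp φ (always ψ))

/-- `⊢ φ`: provability with no hypotheses. -/
def Prv (φ : LTLf Var) : Prop := PrvFrom ∅ φ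

/-! ## Semantics: finite nonempty traces.
A trace of length `n ≥ 1` is given by valuations `η i : Var → Bool` for `1 ≤ i ≤ n`. -/

/-- `Holds η n φ i` says that `K^n_i(φ) = t` in the trace `(η 1, …, η n)`. -/
def Holds (η : ℕ → Var → Bool) (n : ℕ) : LTLf Var → ℕ → Prop
  | var v, i => η i v = true
  | bot, _ => False
  | imp φ ψ, i => Holds η n φ i → Holds η n ψ i
  | next φ, i => i < n ∧ Holds η n φ (i + 1)
  | wuntil φ ψ, i =>
      (∀ j, i ≤ j → j ≤ n → Holds η n φ j) ∨
      (∃ k, i ≤ k ∧ k ≤ n ∧ Holds η n ψ k ∧ ∀ j, i ≤ j → j < k → Holds η n φ j)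

/-- `K^n ⊨ φ`: φ holds at every time step `1 ≤ i ≤ n`. -/
def Models (η : ℕ → Var → Bool) (n : ℕ) (φ : LTLf Var) : Prop :=
  ∀ i, 1 ≤ i → i ≤ n → Holds η n φ i

/-- `⊨ φ`: φ is valid, i.e., satisfied by every finite nonempty trace. -/
def Valid (φ : LTLf Var) : Prop :=
  ∀ (n : ℕ), 1 ≤ n → ∀ η : ℕ → Var → Bool, Models η n φ

/-- `F ⊨ φ`: φ is valid under the assumptions `F`. -/
def ValidUnder (F : Set (LTLf Var)) (φ : LTLf Var) : Prop :=
  ∀ (n : ℕ), 1 ≤ n → ∀ η : ℕ → Var → Bool,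
    (∀ ψ ∈ F, Models η n ψ) → Models η n φ


section Soundness

open Classical

variable {η : ℕ → Var → Bool} {n i : ℕ} {φ ψ : LTLf Var}

lemma holds_imp : Holds η n (imp φ ψ) i ↔ (Holds η n φ i → Holds η n ψ i) := Iff.rfl

lemma holds_neg : Holds η n (neg φ) i ↔ ¬ Holds η n φ i := Iff.rfl

lemma holds_top : Holds η n (top : LTLf Var) i := fun h => h

lemma holds_next : Holds η n (next φ) i ↔ (i < n ∧ Holds η n φ (i + 1)) := Iff.rfl

lemma holds_wnext : Holds η n (wnext φ) i ↔ (i < n → Holds η n φ (i + 1)) := by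
  constructor
  · intro h hlt
    by_contra hc
    exact h ⟨hlt, hc⟩
  · rintro h ⟨hlt, hc⟩
    exact hc (h hlt)

lemma holds_disj : Holds η n (disj φ ψ) i ↔ (Holds η n φ i ∨ Holds η n ψ i) := by
  unfold disj
  rw [holds_imp, holds_neg]
  tauto

lemma holds_conj : Holds η n (conj φ ψ) i ↔ (Holds η n φ i ∧ Holds η n ψ i) := by
  unfold conj
  rw [holds_neg, holds_disj, holds_neg, holds_neg]
  tauto

lemma holds_liff : Holds η n (liff φ ψ) i ↔ (Holds η n φ i ↔ Holds η n ψ i) := by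
  unfold liff
  rw [holds_conj, holds_imp, holds_imp]
  tauto

lemma holds_endF : Holds η n (endF : LTLf Var) i ↔ ¬ (i < n) := by
  unfold endF
  rw [holds_neg, holds_next]
  constructor
  · intro h hlt; exact h ⟨hlt, holds_top⟩
  · rintro h ⟨hlt, _⟩; exact h hlt

lemma holds_always :
    Holds η n (always φ) i ↔ ∀ j, i ≤ j → j ≤ n → Holds η n φ j := by
  unfold always
  show (_ ∨ _) ↔ _
  constructor
  · rintro (h | ⟨k, _, _, hb, _⟩)
    · exact h
    · exact absurd hb (fun h => h)
  · exact Or.inl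

lemma holds_wuntil_unroll (hin : i ≤ n) :
    Holds η n (wuntil φ ψ) i ↔
      (Holds η n ψ i ∨ (Holds η n φ i ∧ (i < n → Holds η n (wuntil φ ψ) (i + 1)))) := by
  show (_ ∨ _) ↔ _
  constructor
  · rintro (hall | ⟨k, hik, hkn, hb, hall⟩)
    · refine Or.inr ⟨hall i le_rfl hin, fun hlt => Or.inl ?_⟩
      exact fun j hj hjn => hall j (by omega) hjn
    · rcases eq_or_lt_of_le hik with rfl | hik'
      · exact Or.inl hb
      · refine Or.inr ⟨hall i le_rfl hik', fun hlt => Or.inr ?_⟩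
        exact ⟨k, by omega, hkn, hb, fun j hj hjk => hall j (by omega) hjk⟩
  · rintro (hb | ⟨ha, hw⟩)
    · exact Or.inr ⟨i, le_rfl, hin, hb, fun j hj hji => absurd hj (by omega)⟩
    · rcases Nat.lt_or_ge i n with hlt | hge
      · rcases hw hlt with hall | ⟨k, hik, hkn, hb, hall⟩
        · refine Or.inl fun j hj hjn => ?_
          rcases eq_or_lt_of_le hj with rfl | hj'
          · exact ha
          · exact hall j (by omega) hjn
        · refine Or.inr ⟨k, by omega, hkn, hb, fun j hj hjk => ?_⟩
          rcases eq_or_lt_of_le hj with rfl | hj'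
          · exact ha
          · exact hall j (by omega) hjk
      · have hin' : i = n := by omega
        refine Or.inl fun j hj hjn => ?_
        have : j = i := by omega
        subst this; exact ha

instance holdsDecidable (η : ℕ → Var → Bool) (n : ℕ) :
    ∀ (φ : LTLf Var) (i : ℕ), Decidable (Holds η n φ i)
  | var v, i => by unfold Holds; infer_instance
  | bot, i => by unfold Holds; infer_instance
  | imp φ ψ, i =>
      have := holdsDecidable η n φ i
      have := holdsDecidable η n ψ i
      by unfold Holds; infer_instance
  | next φ, i =>
      have := holdsDecidable η n φ (i + 1)
      by unfold Holds; infer_instance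
  | wuntil φ ψ, i =>
      have h1 : ∀ j, Decidable (Holds η n φ j) := fun j => holdsDecidable η n φ j
      have h2 : ∀ k, Decidable (Holds η n ψ k) := fun k => holdsDecidable η n ψ k
      decidable_of_iff
        ((∀ j ≤ n, i ≤ j → Holds η n φ j) ∨
          (∃ k ≤ n, i ≤ k ∧ Holds η n ψ k ∧ ∀ j < k, i ≤ j → Holds η n φ j))
        (by
          show _ ↔ (_ ∨ _)
          constructor
          · rintro (h | ⟨k, hkn, hik, hb, hall⟩)
            · exact Or.inl fun j hj hjn => h j hjn hj
            · exact Or.inr ⟨k, hik, hkn, hb, fun j hj hjk => hall j hjk hj⟩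
          · rintro (h | ⟨k, hik, hkn, hb, hall⟩)
            · exact Or.inl fun j hjn hj => h j hj hjn
            · exact Or.inr ⟨k, hkn, hik, hb, fun j hjk hj => hall j hj hjk⟩)

theorem soundnessFrom {F : Set (LTLf Var)} {φ : LTLf Var}
    (h : PrvFrom F φ) : ValidUnder F φ := by
  induction h with
  | hyp hm => intro n hn η hF; exact hF _ hm
  | @taut φ ht =>
      intro n hn η _ i h1 hi
      have hval : IsPropValuation (fun ψ : LTLf Var => decide (Holds η n ψ i)) := by
        constructor
        · show decide (Holds η n bot i) = false
          simp [Holds]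
          convert decide_eq_false (p := False) id
          exact decide_eq_decide.mpr Iff.rfl
        · intro φ' ψ'
          show decide (Holds η n φ' i → Holds η n ψ' i) = _
          by_cases hφ : Holds η n φ' i <;> by_cases hψ : Holds η n ψ' i <;>
            simp [hφ, hψ]
      have := ht _ hval
      exact of_decide_eq_true this
  | mp _ _ ih1 ih2 =>
      intro n hn η hF i h1 hi
      exact ih1 n hn η hF i h1 hi (ih2 n hn η hF i h1 hi)
  | wkNextDistr φ' ψ' =>
      intro n hn η _ i h1 hi
      rw [holds_liff, holds_imp, holds_wnext, holds_wnext, holds_wnext, holds_imp]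
      tauto
  | endNextContra φ' =>
      intro n hn η _ i h1 hi
      rw [holds_imp, holds_endF, holds_neg, holds_next]
      rintro h ⟨hlt, _⟩
      exact h hlt
  | fin =>
      intro n hn η _ i h1 hi
      show ¬ _
      rw [holds_always]
      intro hall
      have := hall n hi le_rfl
      rw [holds_neg, holds_endF] at this
      exact this (by omega)
  | wkUntilUnroll φ' ψ' =>
      intro n hn η _ i h1 hi
      rw [holds_liff, holds_disj, holds_conj, holds_wnext]
      exact holds_wuntil_unroll hi
  | @wkNextStep φ' _ ih =>
      intro n hn η hF i h1 hi
      rw [holds_wnext]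
      intro hlt
      exact ih n hn η hF (i + 1) (by omega) (by omega)
  | @ind φ' ψ' _ _ ih1 ih2 =>
      intro n hn η hF i h1 hi
      rw [holds_imp, holds_always]
      intro hφ j hij hjn
      have hstep : ∀ j, i ≤ j → j ≤ n → Holds η n φ' j := by
        intro j
        induction j with
        | zero => intro hij _; exact absurd (by omega : (1:ℕ) ≤ 0) (by omega)
        | succ k ihk =>
            intro hik hkn
            rcases Nat.lt_or_ge i (k + 1) with hlt | hge
            · have hk : Holds η n φ' k := ihk (by omega) (by omega)
              have := ih2 n hn η hF k (by omega) (by omega) hk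
              rw [holds_wnext] at this
              exact this (by omega)
            · have : i = k + 1 := by omega
              subst this; exact hφ
      exact ih1 n hn η hF j (by omega) hjn (hstep j hij hjn)

end Soundness

/-- Soundness of LTLf: provable formulae are valid. -/
theorem ltlf_soundness {Var : Type} (φ : LTLf Var) (h : Prv φ) : Valid φ := by
  intro n hn η
  exact soundnessFrom h n hn η (fun ψ hψ => absurd hψ (Set.notMem_empty ψ))

end LTLf
end

section
/- (Semantic deduction theorem) For any set F of LTLf formulas and formulas φ, ψ: F ∪ {φ} ⊨ ψ if and only if F ⊨ □φ ⇒ ψ. -/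
namespace LTLf

variable {Var : Type}

lemma holds_shift {Var : Type} (η : ℕ → Var → Bool) (n d : ℕ) (hd : d ≤ n) :
    ∀ (χ : LTLf Var) (i : ℕ),
      Holds (fun j => η (j + d)) (n - d) χ i ↔ Holds η n χ (i + d) := by
  intro χ
  induction χ with
  | var v => intro i; simp [Holds]
  | bot => intro i; simp [Holds]
  | imp a b iha ihb => intro i; simp only [Holds, iha, ihb]
  | next a ih =>
      intro i
      simp only [Holds]
      constructor
      · rintro ⟨h1, h2⟩
        refine ⟨by omega, ?_⟩
        have := (ih (i + 1)).mp h2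
        have heq : i + 1 + d = i + d + 1 := by omega
        rwa [heq] at this
      · rintro ⟨h1, h2⟩
        refine ⟨by omega, ?_⟩
        rw [ih (i + 1)]
        have heq : i + 1 + d = i + d + 1 := by omega
        rwa [heq]
  | wuntil a b iha ihb =>
      intro i
      simp only [Holds]
      constructor
      · rintro (h | ⟨k, hk1, hk2, hk3, hk4⟩)
        · left
          intro j hj1 hj2
          have := (iha (j - d)).mp (h (j - d) (by omega) (by omega))
          have heq : j - d + d = j := by omega
          rwa [heq] at this
        · right
          refine ⟨k + d, by omega, by omega, (ihb k).mp hk3, ?_⟩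
          intro j hj1 hj2
          have := (iha (j - d)).mp (hk4 (j - d) (by omega) (by omega))
          have heq : j - d + d = j := by omega
          rwa [heq] at this
      · rintro (h | ⟨k, hk1, hk2, hk3, hk4⟩)
        · left
          intro j hj1 hj2
          exact (iha j).mpr (h (j + d) (by omega) (by omega))
        · right
          refine ⟨k - d, by omega, by omega, ?_, ?_⟩
          · have heq : k - d + d = k := by omega
            rw [ihb (k - d), heq]; exact hk3
          · intro j hj1 hj2
            exact (iha j).mpr (hk4 (j + d) (by omega) (by omega))

/-- Semantic deduction theorem: `F ∪ {φ} ⊨ ψ` iff `F ⊨ □φ ⇒ ψ`. -/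
theorem ltlf_semantic_deduction {Var : Type} (F : Set (LTLf Var)) (φ ψ : LTLf Var) :
    ValidUnder (F ∪ {φ}) ψ ↔ ValidUnder F (imp (always φ) ψ) := by
  constructor
  · intro h n hn η hF i hi hin
    intro hbox
    have hφall : ∀ j, i ≤ j → j ≤ n → Holds η n φ j := by
      rcases hbox with h' | ⟨k, _, _, hb, _⟩
      · exact h'
      · exact hb.elim
    set d := i - 1 with hd
    have hdn : d ≤ n := by omega
    have hmod := h (n - d) (by omega) (fun j => η (j + d)) ?_ 1 le_rfl (by omega)
    · have := (holds_shift η n d hdn ψ 1).mp hmod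
      have heq : 1 + d = i := by omega
      rwa [heq] at this
    · intro χ hχ j hj1 hj2
      rw [holds_shift η n d hdn]
      rcases hχ with hχ | hχ
      · exact hF χ hχ (j + d) (by omega) (by omega)
      · rcases hχ with rfl
        exact hφall (j + d) (by omega) (by omega)
  · intro h n hn η hF i hi hin
    have hφ : Models η n φ := hF φ (Or.inr rfl)
    have hF' : ∀ χ ∈ F, Models η n χ := fun χ hχ => hF χ (Or.inl hχ)
    have := h n hn η hF' i hi hin
    exact this (Or.inl (fun j hj1 hj2 => hφ j (by omega) hj2))

end LTLf
end

section
/- (Deduction theorem) For any set F of LTLf formulas and formulas φ, ψ: F ∪ {φ} ⊢ ψ if and only if F ⊢ □φ ⇒ ψ. -/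
namespace LTLf

variable {Var : Type}

/-! ## Auxiliary lemmas for the deduction theorem -/

/-- Monotonicity of provability in the hypothesis set. -/
lemma PrvFrom.mono {F G : Set (LTLf Var)} {φ : LTLf Var}
    (h : PrvFrom F φ) (hFG : F ⊆ G) : PrvFrom G φ := by
  induction h with
  | hyp hm => exact .hyp (hFG hm)
  | taut ht => exact .taut ht
  | mp _ _ ih1 ih2 => exact .mp ih1 ih2
  | wkNextDistr A B => exact .wkNextDistr _ A B
  | endNextContra A => exact .endNextContra _ A
  | fin => exact .fin _
  | wkUntilUnroll A B => exact .wkUntilUnroll _ A B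
  | wkNextStep _ ih => exact .wkNextStep ih
  | ind _ _ ih1 ih2 => exact .ind ih1 ih2

lemma taut_K (A B : LTLf Var) : Tautology (imp A (imp B A)) := by
  rintro f ⟨h0, h1⟩
  simp only [h1]
  cases hA : f A <;> cases hB : f B <;> simp

lemma taut_S (A B C : LTLf Var) :
    Tautology (imp (imp A (imp B C)) (imp (imp A B) (imp A C))) := by
  rintro f ⟨h0, h1⟩
  simp only [h1]
  cases hA : f A <;> cases hB : f B <;> cases hC : f C <;> simp

lemma taut_trans (A B C : LTLf Var) :
    Tautology (imp (imp A B) (imp (imp B C) (imp A C))) := by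
  rintro f ⟨h0, h1⟩
  simp only [h1]
  cases hA : f A <;> cases hB : f B <;> cases hC : f C <;> simp

lemma taut_iffL (A B : LTLf Var) : Tautology (imp (liff A B) (imp A B)) := by
  rintro f ⟨h0, h1⟩
  simp only [liff, conj, disj, neg, h1, h0]
  cases hA : f A <;> cases hB : f B <;> simp

lemma taut_pair (A B : LTLf Var) : Tautology (imp A (imp B (conj A B))) := by
  rintro f ⟨h0, h1⟩
  simp only [conj, disj, neg, h1, h0]
  cases hA : f A <;> cases hB : f B <;> simp

lemma taut_conjL (A B : LTLf Var) : Tautology (imp (conj A B) A) := by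
  rintro f ⟨h0, h1⟩
  simp only [conj, disj, neg, h1, h0]
  cases hA : f A <;> cases hB : f B <;> simp

lemma taut_conjR (A B : LTLf Var) : Tautology (imp (conj A B) B) := by
  rintro f ⟨h0, h1⟩
  simp only [conj, disj, neg, h1, h0]
  cases hA : f A <;> cases hB : f B <;> simp

lemma taut_curry (A B C : LTLf Var) :
    Tautology (imp (imp (conj A B) C) (imp A (imp B C))) := by
  rintro f ⟨h0, h1⟩
  simp only [conj, disj, neg, h1, h0]
  cases hA : f A <;> cases hB : f B <;> cases hC : f C <;> simp

lemma taut_uncurry (A B C : LTLf Var) :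
    Tautology (imp (imp A (imp B C)) (imp (conj A B) C)) := by
  rintro f ⟨h0, h1⟩
  simp only [conj, disj, neg, h1, h0]
  cases hA : f A <;> cases hB : f B <;> cases hC : f C <;> simp

lemma taut_unrollB (A B C : LTLf Var) :
    Tautology (imp (liff A (disj bot (conj B C))) (imp A B)) := by
  rintro f ⟨h0, h1⟩
  simp only [liff, conj, disj, neg, h1, h0]
  cases hA : f A <;> cases hB : f B <;> cases hC : f C <;> simp

lemma taut_unrollC (A B C : LTLf Var) :
    Tautology (imp (liff A (disj bot (conj B C))) (imp A C)) := by
  rintro f ⟨h0, h1⟩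
  simp only [liff, conj, disj, neg, h1, h0]
  cases hA : f A <;> cases hB : f B <;> cases hC : f C <;> simp

lemma taut_D (A B C D : LTLf Var) :
    Tautology (imp (imp A B) (imp (imp A C) (imp (imp B (imp C D)) (imp A D)))) := by
  rintro f ⟨h0, h1⟩
  simp only [h1]
  cases hA : f A <;> cases hB : f B <;> cases hC : f C <;> cases hD : f D <;> simp

lemma taut_top : Tautology (top (Var := Var)) := by
  rintro f ⟨h0, h1⟩
  simp only [top, neg, h1, h0]
  rfl

lemma taut_imp_of (A : LTLf Var) {B : LTLf Var} (h : Tautology B) :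
    Tautology (imp A B) := by
  rintro f hf
  rw [hf.2, h f hf]
  simp

/-- Transitivity of implication as a derived rule. -/
lemma PrvFrom.impTrans {F : Set (LTLf Var)} {A B C : LTLf Var}
    (h1 : PrvFrom F (imp A B)) (h2 : PrvFrom F (imp B C)) :
    PrvFrom F (imp A C) :=
  .mp (.mp (.taut (taut_trans A B C)) h1) h2

/-- `⊢ □φ ⇒ φ`. -/
lemma PrvFrom.boxElim (F : Set (LTLf Var)) (φ : LTLf Var) :
    PrvFrom F (imp (always φ) φ) :=
  .mp (.taut (taut_unrollB (always φ) φ (wnext (always φ))))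
    (.wkUntilUnroll F φ bot)

/-- `⊢ □φ ⇒ •□φ`. -/
lemma PrvFrom.boxNext (F : Set (LTLf Var)) (φ : LTLf Var) :
    PrvFrom F (imp (always φ) (wnext (always φ))) := by
  have h := PrvFrom.wkUntilUnroll F φ bot
  have h2 := PrvFrom.mp (.taut (taut_unrollC (always φ) φ (wnext (always φ)))) h
  exact h2

/-- `⊢ •(A⇒B) ⇒ (•A ⇒ •B)`. -/
lemma PrvFrom.wnextDistrMp (F : Set (LTLf Var)) (A B : LTLf Var) :
    PrvFrom F (imp (wnext (imp A B)) (imp (wnext A) (wnext B))) :=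
  .mp (.taut (taut_iffL _ _)) (.wkNextDistr F A B)

/-- Monotonicity of weak next. -/
lemma PrvFrom.wnextMono {F : Set (LTLf Var)} {A B : LTLf Var}
    (h : PrvFrom F (imp A B)) : PrvFrom F (imp (wnext A) (wnext B)) :=
  .mp (.wnextDistrMp F A B) (.wkNextStep h)

/-- Necessitation for □. -/
lemma PrvFrom.alwaysIntro {F : Set (LTLf Var)} {φ : LTLf Var}
    (h : PrvFrom F φ) : PrvFrom F (always φ) := by
  have htop : PrvFrom F (top (Var := Var)) := .taut taut_top
  have h1 : PrvFrom F (imp top φ) := .mp (.taut (taut_K φ top)) h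
  have h2 : PrvFrom F (imp top (wnext top)) :=
    .mp (.taut (taut_K (wnext top) top)) (.wkNextStep htop)
  exact .mp (.ind h1 h2) htop

/-- Main lemma for the forward direction of the deduction theorem. -/
lemma deduction_aux {G F : Set (LTLf Var)} {φ ψ : LTLf Var}
    (h : PrvFrom G ψ) (hG : G = F ∪ {φ}) :
    PrvFrom F (imp (always φ) ψ) := by
  induction h with
  | @hyp χ hm =>
    subst hG
    rcases hm with hm | hm
    · exact .mp (.taut (taut_K χ (always φ))) (.hyp hm)
    · rcases hm; exact .boxElim F φ
  | taut ht => exact .taut (taut_imp_of _ ht)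
  | @mp A B _ _ ih1 ih2 =>
    exact .mp (.mp (.taut (taut_S (always φ) A B)) ih1) ih2
  | wkNextDistr A B =>
    exact .mp (.taut (taut_K _ _)) (.wkNextDistr F A B)
  | endNextContra A =>
    exact .mp (.taut (taut_K _ _)) (.endNextContra F A)
  | fin =>
    exact .mp (.taut (taut_K _ _)) (.fin F)
  | wkUntilUnroll A B =>
    exact .mp (.taut (taut_K _ _)) (.wkUntilUnroll F A B)
  | @wkNextStep χ _ ih =>
    exact PrvFrom.impTrans (.boxNext F φ) (PrvFrom.wnextMono ih)
  | @ind χ ψ' _ _ ih1 ih2 =>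
    set θ := conj (always φ) χ with hθ
    have hθψ : PrvFrom F (imp θ ψ') :=
      .mp (.taut (taut_uncurry (always φ) χ ψ')) ih1
    have hθnχ : PrvFrom F (imp θ (wnext χ)) :=
      .mp (.taut (taut_uncurry (always φ) χ (wnext χ))) ih2
    have hθbox : PrvFrom F (imp θ (always φ)) := .taut (taut_conjL _ _)
    have hθnbox : PrvFrom F (imp θ (wnext (always φ))) :=
      PrvFrom.impTrans hθbox (.boxNext F φ)
    have hpair : PrvFrom F (imp (wnext (always φ)) (imp (wnext χ) (wnext θ))) := by
      have p : PrvFrom F (imp (always φ) (imp χ θ)) := .taut (taut_pair _ _)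
      have p1 : PrvFrom F (imp (wnext (always φ)) (wnext (imp χ θ))) :=
        PrvFrom.wnextMono p
      exact PrvFrom.impTrans p1 (.wnextDistrMp F χ θ)
    have hθθ : PrvFrom F (imp θ (wnext θ)) :=
      .mp (.mp (.mp (.taut (taut_D θ (wnext (always φ)) (wnext χ) (wnext θ)))
        hθnbox) hθnχ) hpair
    have hind : PrvFrom F (imp θ (always ψ')) := .ind hθψ hθθ
    exact .mp (.taut (taut_curry (always φ) χ (always ψ'))) hind

/-- Deduction theorem: `F ∪ {φ} ⊢ ψ` iff `F ⊢ □φ ⇒ ψ`. -/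
theorem ltlf_deduction {Var : Type} (F : Set (LTLf Var)) (φ ψ : LTLf Var) :
    PrvFrom (F ∪ {φ}) ψ ↔ PrvFrom F (imp (always φ) ψ) := by
  constructor
  · intro h
    exact deduction_aux h rfl
  · intro h
    have h' : PrvFrom (F ∪ {φ}) (imp (always φ) ψ) :=
      h.mono (Set.subset_union_left)
    have hφ : PrvFrom (F ∪ {φ}) φ := .hyp (by simp)
    exact h'.mp hφ.alwaysIntro

end LTLf
end

section
/- (Consistent assignments are completions) For every consistent PNP P and every Q ∈ assigns(F_P): if ⊢ P̂ ⇒ Q̂, then Q ∈ comps(P). -/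
namespace LTLf

variable {Var : Type}

/-! ## Positive-negative pairs (PNPs) -/

/-- A positive-negative pair: two finite sets of formulae. -/
structure PNP (Var : Type) where
  pos : Finset (LTLf Var)
  neg : Finset (LTLf Var)

/-- Conjunction of a list of formulae. -/
def conjList : List (LTLf Var) → LTLf Var
  | [] => top
  | φ :: rest => conj φ (conjList rest)

/-- Disjunction of a list of formulae. -/
def disjList : List (LTLf Var) → LTLf Var
  | [] => bot
  | φ :: rest => disj φ (disjList rest)

variable [DecidableEq Var]

/-- Literal interpretation `P̂`: conjunction of all of `pos P` and of the
negations of all of `neg P`. -/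
noncomputable def PNP.interp (P : PNP Var) : LTLf Var :=
  conjList (P.pos.toList ++ P.neg.toList.map LTLf.neg)

/-- `P` is consistent iff it is not the case that `⊢ ¬P̂`. -/
def PNP.Consistent (P : PNP Var) : Prop := ¬ Prv (LTLf.neg P.interp)

/-- `F_P := pos(P) ∪ neg(P)`. -/
def PNP.forms (P : PNP Var) : Finset (LTLf Var) := P.pos ∪ P.neg

/-- Helper for σ: `{φ | Xφ ∈ S}` pointwise. -/
def nextArgs : LTLf Var → Finset (LTLf Var)
  | next φ => {φ}
  | _ => ∅

/-- Helper for σ⁺₂: keep `φ W ψ` when `ψ` is in the given (negative) set. -/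
def wPosStep (N : Finset (LTLf Var)) : LTLf Var → Finset (LTLf Var)
  | wuntil φ ψ => if ψ ∈ N then {wuntil φ ψ} else ∅
  | _ => ∅

/-- Helper for σ⁻₄: keep `φ W ψ` when `φ` is in the given (positive) set. -/
def wNegStep (Pos : Finset (LTLf Var)) : LTLf Var → Finset (LTLf Var)
  | wuntil φ ψ => if φ ∈ Pos then {wuntil φ ψ} else ∅
  | _ => ∅

/-- The step function σ. -/
def PNP.step (P : PNP Var) : PNP Var :=
  ⟨P.pos.biUnion nextArgs ∪ P.pos.biUnion (wPosStep P.neg),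
   P.neg.biUnion nextArgs ∪ P.neg.biUnion (wNegStep P.pos)⟩

/-- The closure function τ on formulae. -/
def tau : LTLf Var → Finset (LTLf Var)
  | var v => {var v}
  | bot => {bot}
  | imp φ ψ => insert (imp φ ψ) (tau φ ∪ tau ψ)
  | next φ => {next φ}
  | wuntil φ ψ => insert (wuntil φ ψ) (tau φ ∪ tau ψ)

/-- τ on finite sets of formulae. -/
def tauSet (F : Finset (LTLf Var)) : Finset (LTLf Var) := F.biUnion tau

/-- τ(P) := τ(F_P). -/
def PNP.tauP (P : PNP Var) : Finset (LTLf Var) := tauSet P.forms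

/-- `P ≼ Q`. -/
def PNP.Extends (P Q : PNP Var) : Prop := P.pos ⊆ Q.pos ∧ P.neg ⊆ Q.neg

/-- `assigns(F)`: PNPs whose formulae are exactly `τ(F)`. -/
def Assigns (F : Finset (LTLf Var)) : Set (PNP Var) :=
  {P | P.forms = tauSet F}

/-- `comps(P)`: consistent completions of `P`. -/
def Comps (P : PNP Var) : Set (PNP Var) :=
  {Q | Q.forms = P.tauP ∧ P.Extends Q ∧ Q.Consistent}

/-- `assigns(F)` as a finite set. -/
noncomputable def assignsF (F : Finset (LTLf Var)) : Finset (PNP Var) := by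
  classical
  exact (((tauSet F).powerset ×ˢ (tauSet F).powerset).filter
      (fun p => p.1 ∪ p.2 = tauSet F)).image (fun p => ⟨p.1, p.2⟩)

/-- `comps(P)` as a finite set. -/
noncomputable def compsF (P : PNP Var) : Finset (PNP Var) := by
  classical
  exact (assignsF P.forms).filter (fun Q => P.Extends Q ∧ Q.Consistent)

lemma val_conjList {f : LTLf Var → Bool} (hf : IsPropValuation f)
    (L : List (LTLf Var)) : f (conjList L) = L.all f := by
  induction L with
  | nil => simp [conjList, top, neg, hf.2, hf.1]
  | cons a L ih =>
    simp only [conjList, conj, disj, neg, hf.2, hf.1, ih, List.all_cons]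
    cases f a <;> cases L.all f <;> simp

lemma interp_pos {f : LTLf Var → Bool} (hf : IsPropValuation f) {P : PNP Var}
    (h : f P.interp = true) {φ : LTLf Var} (hp : φ ∈ P.pos) : f φ = true := by
  rw [PNP.interp, val_conjList hf, List.all_eq_true] at h
  exact h φ (by simp [hp])

lemma interp_neg {f : LTLf Var → Bool} (hf : IsPropValuation f) {P : PNP Var}
    (h : f P.interp = true) {φ : LTLf Var} (hp : φ ∈ P.neg) : f φ = false := by
  rw [PNP.interp, val_conjList hf, List.all_eq_true] at h
  have := h (LTLf.neg φ) (by simp; right; exact ⟨φ, by simp [hp], rfl⟩)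
  rw [neg, hf.2, hf.1] at this
  cases hfa : f φ <;> simp [hfa] at this ⊢

lemma incompat_incons {P Q : PNP Var} (h : Prv (imp P.interp Q.interp))
    (hc : ∀ f : LTLf Var → Bool, IsPropValuation f →
      f P.interp = true → f Q.interp = false) :
    Prv (LTLf.neg P.interp) := by
  refine PrvFrom.mp (PrvFrom.taut ?_) h
  intro f hf
  simp only [neg, hf.2, hf.1]
  cases hA : f P.interp with
  | false => simp
  | true => simp [hc f hf hA]

lemma taut_transfer (A B : LTLf Var) :
    Tautology (imp (LTLf.neg B) (imp (imp A B) (LTLf.neg A))) := by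
  intro f hf
  simp only [neg, hf.2, hf.1]
  cases f A <;> cases f B <;> simp

lemma self_mem_tau (φ : LTLf Var) : φ ∈ tau φ := by
  cases φ <;> simp [tau]

lemma mem_tauSet {F : Finset (LTLf Var)} {φ : LTLf Var} (h : φ ∈ F) :
    φ ∈ tauSet F := Finset.mem_biUnion.mpr ⟨φ, h, self_mem_tau φ⟩

/-- Consistent assignments are completions: for every consistent PNP `P` and
every `Q ∈ assigns(F_P)`, if ⊢ P̂ ⇒ Q̂ then `Q ∈ comps(P)`. -/
theorem ltlf_assigns_comps {Var : Type} [DecidableEq Var] (P Q : PNP Var)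
    (hP : P.Consistent) (hQ : Q ∈ Assigns P.forms)
    (h : Prv (imp P.interp Q.interp)) : Q ∈ Comps P := by
  have hQ' : Q.forms = tauSet P.forms := hQ
  refine ⟨hQ', ⟨?_, ?_⟩, ?_⟩
  · -- pos ⊆ pos
    intro φ hφ
    have hmem : φ ∈ Q.forms := by
      rw [hQ']; exact mem_tauSet (Finset.mem_union_left _ hφ)
    by_contra hnot
    have hneg : φ ∈ Q.neg := by
      rcases Finset.mem_union.mp hmem with h' | h'
      · exact absurd h' hnot
      · exact h'
    refine hP (incompat_incons h ?_)
    intro f hf hPt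
    by_contra hQt
    rw [Bool.not_eq_false] at hQt
    have h1 := interp_pos hf hPt hφ
    have h2 := interp_neg hf hQt hneg
    rw [h1] at h2; exact Bool.noConfusion h2
  · -- neg ⊆ neg
    intro φ hφ
    have hmem : φ ∈ Q.forms := by
      rw [hQ']; exact mem_tauSet (Finset.mem_union_right _ hφ)
    by_contra hnot
    have hpos : φ ∈ Q.pos := by
      rcases Finset.mem_union.mp hmem with h' | h'
      · exact h'
      · exact absurd h' hnot
    refine hP (incompat_incons h ?_)
    intro f hf hPt
    by_contra hQt
    rw [Bool.not_eq_false] at hQt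
    have h1 := interp_pos hf hQt hpos
    have h2 := interp_neg hf hPt hφ
    rw [h1] at h2; exact Bool.noConfusion h2
  · -- consistency
    intro hQincons
    exact hP (PrvFrom.mp (PrvFrom.mp (PrvFrom.taut
      (taut_transfer P.interp Q.interp)) hQincons) h)

end LTLf
end
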